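/- arXiv:1408.4658 — 2 statements merged into one kernel-verified Lean document; each statement's English description precedes it below -/
import Mathlib

section
/- For every α ∈ (0,1), if K ⊆ ℝ² is a nonempty compact set satisfying K = ⋃_{i=1}^{6} F_{α,i}(K), then the Hausdorff dimension of K (with respect to the Euclidean metric) equals max{1, log 3 / (log 2 − log(1−α))}. In particular, for α ∈ (0,1/3) the dimension is log 3/(log 2 − log(1−α)) > 1, and for α ∈ [1/3,1) the dimension is 1. -/
set_option maxHeartbeats 1600000


/-- The six fixed points `p₁, …, p₆` of the Hanoi maps: the vertices
`p₁ = (0,0)`, `p₂ = (1/2, √3/2)`, `p₃ = (1,0)` of a unit equilateral triangle,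
and the midpoints `p₄, p₅, p₆` of the sides `p₂p₃`, `p₁p₃`, `p₁p₂`. -/
noncomputable def hanoiP : Fin 6 → EuclideanSpace ℝ (Fin 2)
  | 0 => !₂[0, 0]
  | 1 => !₂[1 / 2, Real.sqrt 3 / 2]
  | 2 => !₂[1, 0]
  | 3 => !₂[3 / 4, Real.sqrt 3 / 4]
  | 4 => !₂[1 / 2, 0]
  | 5 => !₂[1 / 4, Real.sqrt 3 / 4]

/-- The linear parts `A₁, …, A₆` of the Hanoi maps of parameter `α`:
`A₁ = A₂ = A₃ = ((1−α)/2)·I`, `A₄ = (α/4)·[[1, −√3], [−√3, 3]]`,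
`A₅ = α·[[1, 0], [0, 0]]`, `A₆ = (α/4)·[[1, √3], [√3, 3]]`. -/
noncomputable def hanoiA (α : ℝ) : Fin 6 → EuclideanSpace ℝ (Fin 2) → EuclideanSpace ℝ (Fin 2)
  | 0 => fun v => !₂[(1 - α) / 2 * v 0, (1 - α) / 2 * v 1]
  | 1 => fun v => !₂[(1 - α) / 2 * v 0, (1 - α) / 2 * v 1]
  | 2 => fun v => !₂[(1 - α) / 2 * v 0, (1 - α) / 2 * v 1]
  | 3 => fun v => !₂[α / 4 * (v 0 - Real.sqrt 3 * v 1), α / 4 * (-Real.sqrt 3 * v 0 + 3 * v 1)]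
  | 4 => fun v => !₂[α * v 0, 0]
  | 5 => fun v => !₂[α / 4 * (v 0 + Real.sqrt 3 * v 1), α / 4 * (Real.sqrt 3 * v 0 + 3 * v 1)]

/-- The affine Hanoi maps `F_{α,i}(x) = A_i(x − p_i) + p_i`. -/
noncomputable def hanoiF (α : ℝ) (i : Fin 6) (x : EuclideanSpace ℝ (Fin 2)) :
    EuclideanSpace ℝ (Fin 2) :=
  hanoiA α i (x - hanoiP i) + hanoiP i

namespace Hanoi

abbrev V2 := EuclideanSpace ℝ (Fin 2)

lemma sqrt3_sq : Real.sqrt 3 ^ 2 = 3 := Real.sq_sqrt (by norm_num)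
lemma sqrt3_pos : 0 < Real.sqrt 3 := Real.sqrt_pos.2 (by norm_num)

lemma norm_eq (x : V2) : ‖x‖ = Real.sqrt (x 0 ^ 2 + x 1 ^ 2) := by
  rw [EuclideanSpace.norm_eq]; simp [Fin.sum_univ_two, sq]

lemma dist_eq (x y : V2) : dist x y = Real.sqrt ((x 0 - y 0) ^ 2 + (x 1 - y 1) ^ 2) := by
  rw [EuclideanSpace.dist_eq]
  simp [Fin.sum_univ_two, sq, Real.dist_eq, abs_mul_abs_self]

/-- Unit covector applied to `x - y` bounds `dist` below. -/
lemma le_dist (x y : V2) {a b : ℝ} (hab : a ^ 2 + b ^ 2 = 1) :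
    a * (x 0 - y 0) + b * (x 1 - y 1) ≤ dist x y := by
  rw [dist_eq]
  set u := x 0 - y 0; set v := x 1 - y 1
  have h1 : (a * u + b * v) ^ 2 ≤ u ^ 2 + v ^ 2 := by nlinarith [sq_nonneg (a * v - b * u)]
  calc a * u + b * v ≤ |a * u + b * v| := le_abs_self _
    _ = Real.sqrt ((a * u + b * v) ^ 2) := (Real.sqrt_sq_eq_abs _).symm
    _ ≤ _ := Real.sqrt_le_sqrt h1

lemma coord_dist_le (x y : V2) (i : Fin 2) : |x i - y i| ≤ dist x y := by
  rw [dist_eq]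
  have h0 : (0:ℝ) ≤ (x 0 - y 0) ^ 2 + (x 1 - y 1) ^ 2 := by positivity
  fin_cases i <;> simp only [Fin.isValue, Fin.zero_eta, Fin.mk_one] <;>
  · rw [abs_le]
    constructor <;> nlinarith [Real.sq_sqrt h0, Real.sqrt_nonneg ((x 0 - y 0) ^ 2 + (x 1 - y 1) ^ 2)]

lemma lipschitz_coord (i : Fin 2) : LipschitzWith 1 (fun x : V2 => x i) := by
  refine LipschitzWith.of_dist_le_mul fun x y => ?_
  rw [Real.dist_eq, NNReal.coe_one, one_mul]
  exact coord_dist_le x y i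

lemma dist_le_of_sq {x y x' y' : V2} {c : ℝ} (hc : 0 ≤ c)
    (h : (x 0 - y 0) ^ 2 + (x 1 - y 1) ^ 2 ≤ c ^ 2 * ((x' 0 - y' 0) ^ 2 + (x' 1 - y' 1) ^ 2)) :
    dist x y ≤ c * dist x' y' := by
  rw [dist_eq, dist_eq, ← Real.sqrt_sq hc, ← Real.sqrt_mul (sq_nonneg c)]
  exact Real.sqrt_le_sqrt h

section
variable {α : ℝ}

/-- coordinates of the corner maps -/
lemma cornerF_apply (i : Fin 6) (hi : i < 3) (x : V2) (j : Fin 2) :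
    hanoiF α i x j = (1 - α) / 2 * x j + (1 - (1 - α) / 2) * hanoiP i j := by
  fin_cases i <;> [skip; skip; skip; exact absurd hi (by decide); exact absurd hi (by decide);
    exact absurd hi (by decide)] <;> fin_cases j <;>
    simp [hanoiF, hanoiA, hanoiP, PiLp.add_apply, PiLp.sub_apply] <;> ring

/-- corner maps are exact similarities with ratio `(1-α)/2` -/
lemma corner_dist (hα' : α ≤ 1) (i : Fin 6) (hi : i < 3) (x y : V2) :
    dist (hanoiF α i x) (hanoiF α i y) = (1 - α) / 2 * dist x y := by
  have h0 : (0:ℝ) ≤ (1 - α) / 2 := by linarith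
  rw [dist_eq, dist_eq (x := x), ← Real.sqrt_sq h0, ← Real.sqrt_mul (sq_nonneg _)]
  congr 1
  rw [cornerF_apply _ hi, cornerF_apply _ hi, cornerF_apply _ hi, cornerF_apply _ hi]
  ring

/-- middle maps are `α`-Lipschitz -/
lemma middle_dist_le (hα0 : 0 ≤ α) (i : Fin 6) (hi : 3 ≤ i) (x y : V2) :
    dist (hanoiF α i x) (hanoiF α i y) ≤ α * dist x y := by
  have h3 := sqrt3_sq
  have hsq := sq_nonneg α
  fin_cases i <;> [exact absurd hi (by decide); exact absurd hi (by decide);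
    exact absurd hi (by decide); skip; skip; skip] <;>
    refine dist_le_of_sq hα0 ?_ <;>
    simp [hanoiF, hanoiA, hanoiP, PiLp.add_apply, PiLp.sub_apply] <;>
    nlinarith [mul_nonneg hsq (sq_nonneg (Real.sqrt 3 * (x 0 - y 0) + (x 1 - y 1))),
      mul_nonneg hsq (sq_nonneg (Real.sqrt 3 * (x 0 - y 0) - (x 1 - y 1))),
      mul_nonneg hsq (sq_nonneg (x 1 - y 1))]

/-- all maps are Lipschitz with constant `max ((1-α)/2) α` -/
lemma hanoiF_dist_le (hα : α ∈ Set.Ioo (0:ℝ) 1) (i : Fin 6) (x y : V2) :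
    dist (hanoiF α i x) (hanoiF α i y) ≤ max ((1 - α) / 2) α * dist x y := by
  obtain ⟨h0, h1⟩ := hα
  rcases lt_or_ge i 3 with hi | hi
  · rw [corner_dist h1.le i hi]
    exact mul_le_mul_of_nonneg_right (le_max_left _ _) dist_nonneg
  · exact (middle_dist_le h0.le i hi x y).trans
      (mul_le_mul_of_nonneg_right (le_max_right _ _) dist_nonneg)


/-- The closed solid triangle with vertices `p₁, p₂, p₃`. -/
def T : Set V2 :=
  {x | 0 ≤ x 1 ∧ x 1 ≤ Real.sqrt 3 * x 0 ∧ x 1 ≤ Real.sqrt 3 * (1 - x 0)}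

lemma isClosed_T : IsClosed T := by
  have c0 := (lipschitz_coord 0).continuous
  have c1 := (lipschitz_coord 1).continuous
  exact (isClosed_le continuous_const c1).inter
    ((isClosed_le c1 (continuous_const.mul c0)).inter
      (isClosed_le c1 (continuous_const.mul (continuous_const.sub c0))))

lemma T_bounds {x : V2} (hx : x ∈ T) :
    0 ≤ x 0 ∧ x 0 ≤ 1 ∧ 0 ≤ x 0 + Real.sqrt 3 * x 1 ∧ x 0 + Real.sqrt 3 * x 1 ≤ 2 ∧
      -1 ≤ -x 0 + Real.sqrt 3 * x 1 ∧ -x 0 + Real.sqrt 3 * x 1 ≤ 1 := by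
  obtain ⟨h1, h2, h3⟩ := hx
  have hs := sqrt3_sq
  have hp := sqrt3_pos
  refine ⟨by nlinarith, by nlinarith, by nlinarith, ?_, by nlinarith, ?_⟩
  · nlinarith [mul_le_mul_of_nonneg_left h2 hp.le, mul_le_mul_of_nonneg_left h3 hp.le]
  · nlinarith [mul_le_mul_of_nonneg_left h2 hp.le, mul_le_mul_of_nonneg_left h3 hp.le]

lemma cornerP_mem_T (i : Fin 6) (hi : i < 3) : hanoiP i ∈ T := by
  have hs := sqrt3_sq
  have hp := sqrt3_pos
  fin_cases i <;> [skip; skip; skip; exact absurd hi (by decide); exact absurd hi (by decide);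
    exact absurd hi (by decide)] <;>
    refine ⟨?_, ?_, ?_⟩ <;> simp [hanoiP] <;> nlinarith

lemma corner_maps_T {α : ℝ} (hα : α ∈ Set.Ioo (0:ℝ) 1) (i : Fin 6) (hi : i < 3) {x : V2}
    (hx : x ∈ T) : hanoiF α i x ∈ T := by
  obtain ⟨h1, h2, h3⟩ := hx
  obtain ⟨ha0, ha1⟩ := hα
  have hs := sqrt3_sq
  have hp := sqrt3_pos
  simp only [T, Set.mem_setOf_eq]
  fin_cases i <;> [skip; skip; skip; exact absurd hi (by decide); exact absurd hi (by decide);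
      exact absurd hi (by decide)] <;>
    simp [hanoiF, hanoiA, hanoiP, PiLp.add_apply, PiLp.sub_apply] <;>
    refine ⟨by nlinarith, by nlinarith, by nlinarith⟩

/-- separation of the corner pieces -/
lemma corner_sep {α : ℝ} (hα : α ∈ Set.Ioo (0:ℝ) 1) (i j : Fin 6) (hi : i < 3) (hj : j < 3)
    (hij : i ≠ j) {x y : V2} (hx : x ∈ T) (hy : y ∈ T) :
    α ≤ dist (hanoiF α i x) (hanoiF α j y) := by
  obtain ⟨hx1, hx2, hx3, hx4, hx5, hx6⟩ := T_bounds hx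
  obtain ⟨hy1, hy2, hy3, hy4, hy5, hy6⟩ := T_bounds hy
  obtain ⟨ha0, ha1⟩ := hα
  have hs := sqrt3_sq
  have hp := sqrt3_pos
  have hr0 : (0:ℝ) ≤ (1 - α) / 2 := by linarith
  have key : ∀ a b : ℝ, a ^ 2 + b ^ 2 = 1 →
      α ≤ a * (hanoiF α i x 0 - hanoiF α j y 0) + b * (hanoiF α i x 1 - hanoiF α j y 1) →
      α ≤ dist (hanoiF α i x) (hanoiF α j y) := fun a b hab h =>
    h.trans (le_dist _ _ hab)
  fin_cases i <;> [skip; skip; skip; exact absurd hi (by decide); exact absurd hi (by decide);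
      exact absurd hi (by decide)] <;>
    fin_cases j <;> first
      | exact absurd hj (by decide)
      | exact absurd rfl hij
      | (refine key (-1) 0 (by norm_num) ?_
         rw [cornerF_apply _ (by decide), cornerF_apply _ (by decide),
            cornerF_apply _ (by decide), cornerF_apply _ (by decide)]
         simp [hanoiP]; nlinarith)
      | (refine key 1 0 (by norm_num) ?_
         rw [cornerF_apply _ (by decide), cornerF_apply _ (by decide),
            cornerF_apply _ (by decide), cornerF_apply _ (by decide)]
         simp [hanoiP]; nlinarith)
      | (refine key (1/2) (Real.sqrt 3 / 2) (by nlinarith) ?_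
         rw [cornerF_apply _ (by decide), cornerF_apply _ (by decide),
            cornerF_apply _ (by decide), cornerF_apply _ (by decide)]
         simp [hanoiP]; nlinarith)
      | (refine key (-(1/2)) (-(Real.sqrt 3 / 2)) (by nlinarith) ?_
         rw [cornerF_apply _ (by decide), cornerF_apply _ (by decide),
            cornerF_apply _ (by decide), cornerF_apply _ (by decide)]
         simp [hanoiP]; nlinarith)
      | (refine key (-(1/2)) (Real.sqrt 3 / 2) (by nlinarith) ?_
         rw [cornerF_apply _ (by decide), cornerF_apply _ (by decide),
            cornerF_apply _ (by decide), cornerF_apply _ (by decide)]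
         simp [hanoiP]; nlinarith)
      | (refine key (1/2) (-(Real.sqrt 3 / 2)) (by nlinarith) ?_
         rw [cornerF_apply _ (by decide), cornerF_apply _ (by decide),
            cornerF_apply _ (by decide), cornerF_apply _ (by decide)]
         simp [hanoiP]; nlinarith)

end

/-! ### Words and compositions -/

noncomputable def Fl (α : ℝ) : List (Fin 6) → V2 → V2
  | [] => id
  | i :: l => fun x => hanoiF α i (Fl α l x)

@[simp] lemma Fl_nil (α : ℝ) (x : V2) : Fl α [] x = x := rfl
@[simp] lemma Fl_cons (α : ℝ) (i : Fin 6) (l : List (Fin 6)) (x : V2) :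
    Fl α (i :: l) x = hanoiF α i (Fl α l x) := rfl

lemma Fl_append (α : ℝ) (l l' : List (Fin 6)) (x : V2) :
    Fl α (l ++ l') x = Fl α l (Fl α l' x) := by
  induction l with
  | nil => rfl
  | cons i l ih => simp [ih]

section
variable {α : ℝ} {K : Set V2}

lemma F_image_subset (hK : K = ⋃ i : Fin 6, hanoiF α i '' K) (i : Fin 6) : hanoiF α i '' K ⊆ K := by
  conv_rhs => rw [hK]
  exact Set.subset_iUnion (fun j => hanoiF α j '' K) i

lemma F_mem (hK : K = ⋃ i : Fin 6, hanoiF α i '' K) (i : Fin 6) {x : V2} (hx : x ∈ K) : hanoiF α i x ∈ K :=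
  F_image_subset hK i ⟨x, hx, rfl⟩

lemma Fl_mem (hK : K = ⋃ i : Fin 6, hanoiF α i '' K) (l : List (Fin 6)) {x : V2} (hx : x ∈ K) : Fl α l x ∈ K := by
  induction l with
  | nil => exact hx
  | cons i l ih => exact F_mem hK i ih

lemma Fl_dist_le (hα : α ∈ Set.Ioo (0:ℝ) 1) (l : List (Fin 6)) (x y : V2) :
    dist (Fl α l x) (Fl α l y) ≤ (max ((1 - α) / 2) α) ^ l.length * dist x y := by
  obtain ⟨h0, h1⟩ := hα
  have hc : (0:ℝ) ≤ max ((1 - α) / 2) α := le_max_of_le_right h0.le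
  induction l with
  | nil => simp
  | cons i l ih =>
      calc dist (Fl α (i :: l) x) (Fl α (i :: l) y)
          ≤ max ((1 - α) / 2) α * dist (Fl α l x) (Fl α l y) := hanoiF_dist_le ⟨h0, h1⟩ i _ _
        _ ≤ max ((1 - α) / 2) α * ((max ((1 - α) / 2) α) ^ l.length * dist x y) :=
            mul_le_mul_of_nonneg_left ih hc
        _ = (max ((1 - α) / 2) α) ^ (i :: l).length * dist x y := by
            rw [List.length_cons, pow_succ]; ring

lemma Fl_corner_dist (hα1 : α ≤ 1) (l : List (Fin 6)) (hl : ∀ i ∈ l, i < 3) (x y : V2) :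
    dist (Fl α l x) (Fl α l y) = ((1 - α) / 2) ^ l.length * dist x y := by
  induction l with
  | nil => simp
  | cons i l ih =>
      rw [Fl_cons, Fl_cons, corner_dist hα1 i (hl i (List.mem_cons_self)),
        ih fun j hj => hl j (List.mem_cons_of_mem i hj), List.length_cons, pow_succ]
      ring

lemma Fl_corner_T (hα : α ∈ Set.Ioo (0:ℝ) 1) (l : List (Fin 6)) (hl : ∀ i ∈ l, i < 3) {x : V2} (hx : x ∈ T) :
    Fl α l x ∈ T := by
  induction l with
  | nil => exact hx
  | cons i l ih =>
      exact corner_maps_T hα i (hl i (List.mem_cons_self))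
        (ih fun j hj => hl j (List.mem_cons_of_mem i hj))

/-! ### The base point `p₀ = 0` belongs to `K` -/

lemma p0_fixed : hanoiF α 0 (hanoiP 0) = hanoiP 0 := by
  ext j
  rw [cornerF_apply 0 (by decide)]
  fin_cases j <;> simp [hanoiP]

lemma Fl_replicate_p0 (n : ℕ) : Fl α (List.replicate n 0) (hanoiP 0) = hanoiP 0 := by
  induction n with
  | zero => rfl
  | succ n ih => rw [List.replicate_succ, Fl_cons, ih, p0_fixed]

lemma max_lt_one (hα : α ∈ Set.Ioo (0:ℝ) 1) : max ((1 - α) / 2) α < 1 := by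
  obtain ⟨h0, h1⟩ := hα
  exact max_lt (by linarith) h1

lemma tendsto_of_dist_le_geom (hα : α ∈ Set.Ioo (0:ℝ) 1) {f : ℕ → V2} {z : V2} {C : ℝ}
    (h : ∀ n, dist (f n) z ≤ C * (max ((1 - α) / 2) α) ^ n) :
    Filter.Tendsto f Filter.atTop (nhds z) := by
  obtain ⟨h0, h1⟩ := hα
  have hc : (0:ℝ) ≤ max ((1 - α) / 2) α := le_max_of_le_right h0.le
  have hlim : Filter.Tendsto (fun n => C * (max ((1 - α) / 2) α) ^ n) Filter.atTop (nhds 0) := by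
    rw [show (0:ℝ) = C * 0 by ring]
    exact (tendsto_pow_atTop_nhds_zero_of_lt_one hc (max_lt (by linarith) h1)).const_mul C
  rw [tendsto_iff_dist_tendsto_zero]
  exact squeeze_zero (fun n => dist_nonneg) h hlim

lemma p0_mem_K (hα : α ∈ Set.Ioo (0:ℝ) 1) (hK : K = ⋃ i : Fin 6, hanoiF α i '' K) (hKne : K.Nonempty) (hKc : IsCompact K) : hanoiP 0 ∈ K := by
  obtain ⟨k, hk⟩ := hKne
  refine hKc.isClosed.mem_of_tendsto (tendsto_of_dist_le_geom hα (f := fun n =>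
    Fl α (List.replicate n 0) k) (C := dist k (hanoiP 0)) fun n => ?_)
    (Filter.Eventually.of_forall fun n => Fl_mem hK _ hk)
  calc dist (Fl α (List.replicate n 0) k) (hanoiP 0)
      = dist (Fl α (List.replicate n 0) k) (Fl α (List.replicate n 0) (hanoiP 0)) := by
        rw [Fl_replicate_p0]
    _ ≤ (max ((1 - α) / 2) α) ^ (List.replicate n 0 : List (Fin 6)).length * dist k (hanoiP 0) :=
        Fl_dist_le hα _ _ _
    _ = dist k (hanoiP 0) * (max ((1 - α) / 2) α) ^ n := by rw [List.length_replicate]; ring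


/-! ### The coding map of the corner system -/

def c3 (j : Fin 3) : Fin 6 := Fin.castLE (by norm_num) j

lemma c3_lt (j : Fin 3) : c3 j < 3 := by
  fin_cases j <;> decide

lemma c3_inj {j j' : Fin 3} (h : c3 j = c3 j') : j = j' := by
  rcases j with ⟨j, hj⟩; rcases j' with ⟨j', hj'⟩
  simpa [c3, Fin.ext_iff] using congrArg Fin.val h

def cw (w : ℕ → Fin 3) (n : ℕ) : List (Fin 6) := List.ofFn fun i : Fin n => c3 (w i)

@[simp] lemma cw_length (w : ℕ → Fin 3) (n : ℕ) : (cw w n).length = n := by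
  simp [cw]

lemma cw_mem_lt (w : ℕ → Fin 3) (n : ℕ) : ∀ i ∈ cw w n, i < 3 := by
  intro i hi
  obtain ⟨j, rfl⟩ := List.mem_ofFn.1 hi
  exact c3_lt _

lemma cw_succ_left (w : ℕ → Fin 3) (n : ℕ) :
    cw w (n + 1) = c3 (w 0) :: cw (fun k => w (k + 1)) n := by
  simp [cw, List.ofFn_succ]

lemma cw_succ_right (w : ℕ → Fin 3) (n : ℕ) :
    cw w (n + 1) = cw w n ++ [c3 (w n)] := by
  rw [cw, List.ofFn_succ']
  simp only [List.concat_eq_append, Fin.coe_castSucc, Fin.val_last]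
  rfl

noncomputable def piH (α : ℝ) (w : ℕ → Fin 3) : V2 :=
  Filter.limUnder Filter.atTop fun n => Fl α (cw w n) (hanoiP 0)

section
variable {α : ℝ} {K : Set V2}

lemma dist_p0_F_le (hα : α ∈ Set.Ioo (0:ℝ) 1) (j : Fin 3) :
    dist (hanoiP 0) (hanoiF α (c3 j) (hanoiP 0)) ≤ 1 := by
  obtain ⟨h0, h1⟩ := hα
  have hs := sqrt3_sq
  have key : ∀ i : Fin 6, i < 3 → dist (hanoiP 0) (hanoiF α i (hanoiP 0)) ≤ 1 := by
    intro i hi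
    rw [dist_eq, cornerF_apply i hi, cornerF_apply i hi, Real.sqrt_le_one]
    fin_cases i <;> [skip; skip; skip; exact absurd hi (by decide); exact absurd hi (by decide);
        exact absurd hi (by decide)] <;>
      simp [hanoiP] <;> first
        | nlinarith
        | (rw [abs_le]; constructor <;> nlinarith)
  exact key _ (c3_lt j)

lemma piH_cauchy (hα : α ∈ Set.Ioo (0:ℝ) 1) (w : ℕ → Fin 3) :
    CauchySeq fun n => Fl α (cw w n) (hanoiP 0) := by
  obtain ⟨h0, h1⟩ := hα
  refine cauchySeq_of_le_geometric ((1 - α) / 2) 1 (by linarith) fun n => ?_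
  rw [cw_succ_right, Fl_append]
  calc dist (Fl α (cw w n) (hanoiP 0)) (Fl α (cw w n) (Fl α [c3 (w n)] (hanoiP 0)))
      = ((1 - α) / 2) ^ (cw w n).length * dist (hanoiP 0) (Fl α [c3 (w n)] (hanoiP 0)) :=
        Fl_corner_dist (by linarith) _ (cw_mem_lt w n) _ _
    _ ≤ ((1 - α) / 2) ^ n * 1 := by
        rw [cw_length]
        exact mul_le_mul_of_nonneg_left (dist_p0_F_le ⟨h0, h1⟩ (w n)) (pow_nonneg (by linarith) n)
    _ = 1 * ((1 - α) / 2) ^ n := by ring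

lemma piH_tendsto (hα : α ∈ Set.Ioo (0:ℝ) 1) (w : ℕ → Fin 3) :
    Filter.Tendsto (fun n => Fl α (cw w n) (hanoiP 0)) Filter.atTop (nhds (piH α w)) :=
  (piH_cauchy hα w).tendsto_limUnder

lemma piH_mem_K (hα : α ∈ Set.Ioo (0:ℝ) 1) (hK : K = ⋃ i : Fin 6, hanoiF α i '' K)
    (hKne : K.Nonempty) (hKc : IsCompact K) (w : ℕ → Fin 3) : piH α w ∈ K :=
  hKc.isClosed.mem_of_tendsto (piH_tendsto hα w)
    (Filter.Eventually.of_forall fun n => Fl_mem hK _ (p0_mem_K hα hK hKne hKc))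

lemma piH_mem_T (hα : α ∈ Set.Ioo (0:ℝ) 1) (w : ℕ → Fin 3) : piH α w ∈ T :=
  isClosed_T.mem_of_tendsto (piH_tendsto hα w)
    (Filter.Eventually.of_forall fun n =>
      Fl_corner_T hα _ (cw_mem_lt w n) (cornerP_mem_T 0 (by decide)))

lemma hanoiF_lipschitz (hα : α ∈ Set.Ioo (0:ℝ) 1) (i : Fin 6) :
    LipschitzWith (Real.toNNReal (max ((1 - α) / 2) α)) (hanoiF α i) := by
  refine LipschitzWith.of_dist_le_mul fun x y => ?_
  rw [Real.coe_toNNReal _ (le_max_of_le_right hα.1.le)]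
  exact hanoiF_dist_le hα i x y

lemma piH_shift (hα : α ∈ Set.Ioo (0:ℝ) 1) (w : ℕ → Fin 3) :
    piH α w = hanoiF α (c3 (w 0)) (piH α fun k => w (k + 1)) := by
  have h1 : Filter.Tendsto (fun n => Fl α (cw w (n + 1)) (hanoiP 0)) Filter.atTop
      (nhds (piH α w)) := (piH_tendsto hα w).comp (Filter.tendsto_add_atTop_nat 1)
  have h2 : Filter.Tendsto (fun n => Fl α (cw w (n + 1)) (hanoiP 0)) Filter.atTop
      (nhds (hanoiF α (c3 (w 0)) (piH α fun k => w (k + 1)))) := by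
    have : ∀ n, Fl α (cw w (n + 1)) (hanoiP 0)
        = hanoiF α (c3 (w 0)) (Fl α (cw (fun k => w (k + 1)) n) (hanoiP 0)) := by
      intro n; rw [cw_succ_left]; rfl
    simp only [this]
    exact ((hanoiF_lipschitz hα (c3 (w 0))).continuous.tendsto _).comp
      (piH_tendsto hα fun k => w (k + 1))
  exact tendsto_nhds_unique h1 h2

/-- separation estimate for the coding map -/
lemma piH_sep (hα : α ∈ Set.Ioo (0:ℝ) 1) :
    ∀ (n : ℕ) (w w' : ℕ → Fin 3), (∃ i, i ≤ n ∧ w i ≠ w' i) →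
      α * ((1 - α) / 2) ^ n ≤ dist (piH α w) (piH α w') := by
  have h0 := hα.1; have h1 := hα.2
  have hr0 : (0:ℝ) ≤ (1 - α) / 2 := by linarith
  have hr1 : (1 - α) / 2 ≤ 1 := by linarith
  intro n
  induction n with
  | zero =>
      intro w w' ⟨i, hi, hne⟩
      interval_cases i
      rw [piH_shift hα w, piH_shift hα w', pow_zero, mul_one]
      exact corner_sep hα _ _ (c3_lt _) (c3_lt _) (fun h => hne (c3_inj h))
        (piH_mem_T hα _) (piH_mem_T hα _)
  | succ n ih =>
      intro w w' ⟨i, hi, hne⟩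
      rcases eq_or_ne (w 0) (w' 0) with he | he
      · have hi1 : 1 ≤ i := by
          rcases Nat.eq_zero_or_pos i with rfl | h
          · exact absurd he hne
          · exact h
        have hstep := ih (fun k => w (k + 1)) (fun k => w' (k + 1))
          ⟨i - 1, by omega, by simpa only [Nat.sub_add_cancel hi1] using hne⟩
        rw [piH_shift hα w, piH_shift hα w', he,
          corner_dist h1.le _ (c3_lt (w' 0))]
        calc α * ((1 - α) / 2) ^ (n + 1) = (1 - α) / 2 * (α * ((1 - α) / 2) ^ n) := by ring
          _ ≤ (1 - α) / 2 * dist (piH α fun k => w (k + 1)) (piH α fun k => w' (k + 1)) :=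
              mul_le_mul_of_nonneg_left hstep hr0
      · rw [piH_shift hα w, piH_shift hα w']
        calc α * ((1 - α) / 2) ^ (n + 1) ≤ α * 1 := by
              refine mul_le_mul_of_nonneg_left (pow_le_one₀ hr0 hr1) h0.le
          _ = α := mul_one α
          _ ≤ _ := corner_sep hα _ _ (c3_lt _) (c3_lt _) (fun h => he (c3_inj h))
              (piH_mem_T hα _) (piH_mem_T hα _)

end
end

/-! ### Ternary digit expansion -/

noncomputable def tdig (t : ℝ) (n : ℕ) : Fin 3 := ⟨⌊t * 3 ^ (n + 1)⌋₊ % 3, Nat.mod_lt _ (by norm_num)⟩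

lemma tdig_measurable (n : ℕ) : Measurable fun t : ℝ => tdig t n := by
  have h1 : Measurable fun t : ℝ => ⌊t * 3 ^ (n + 1)⌋₊ := (measurable_id.mul_const _).nat_floor
  exact (measurable_of_countable fun m : ℕ =>
    (⟨m % 3, Nat.mod_lt _ (by norm_num)⟩ : Fin 3)).comp h1

lemma floor_step (t : ℝ) (n : ℕ) :
    ⌊t * 3 ^ (n + 1)⌋₊ = 3 * ⌊t * 3 ^ n⌋₊ + ⌊t * 3 ^ (n + 1)⌋₊ % 3 := by
  have h : ⌊t * 3 ^ (n + 1)⌋₊ / 3 = ⌊t * 3 ^ n⌋₊ := by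
    rw [← Nat.floor_div_natCast]
    congr 1
    rw [pow_succ]
    push_cast
    ring
  omega

lemma floor_eq_of_digits_eq {t t' : ℝ} (ht : t ∈ Set.Ico (0:ℝ) 1) (ht' : t' ∈ Set.Ico (0:ℝ) 1) :
    ∀ n, (∀ i < n, tdig t i = tdig t' i) → ⌊t * 3 ^ n⌋₊ = ⌊t' * 3 ^ n⌋₊ := by
  intro n
  induction n with
  | zero =>
      intro _
      rw [pow_zero, mul_one, mul_one, Nat.floor_eq_zero.2 ht.2, Nat.floor_eq_zero.2 ht'.2]
  | succ n ih =>
      intro h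
      have hd : ⌊t * 3 ^ (n + 1)⌋₊ % 3 = ⌊t' * 3 ^ (n + 1)⌋₊ % 3 := by
        have := h n (lt_add_one n)
        simpa [tdig] using congrArg Fin.val this
      have h1 := floor_step t n
      have h2 := floor_step t' n
      have h3 := ih fun i hi => h i (hi.trans (lt_add_one n))
      omega

lemma prefix_vol (a : ℕ → Fin 3) (n : ℕ) :
    MeasureTheory.volume {t : ℝ | t ∈ Set.Ico (0:ℝ) 1 ∧ ∀ i < n, tdig t i = a i}
      ≤ ENNReal.ofReal ((1 / 3 : ℝ) ^ n) := by
  set S := {t : ℝ | t ∈ Set.Ico (0:ℝ) 1 ∧ ∀ i < n, tdig t i = a i}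
  rcases S.eq_empty_or_nonempty with hS | ⟨t', ht'⟩
  · rw [hS]; simp
  have hsub : S ⊆ Set.Ico ((⌊t' * 3 ^ n⌋₊ : ℝ) / 3 ^ n) ((⌊t' * 3 ^ n⌋₊ + 1 : ℝ) / 3 ^ n) := by
    intro t ht
    have heq : ⌊t * 3 ^ n⌋₊ = ⌊t' * 3 ^ n⌋₊ :=
      floor_eq_of_digits_eq ht.1 ht'.1 n fun i hi => (ht.2 i hi).trans (ht'.2 i hi).symm
    have hpos : (0:ℝ) < 3 ^ n := by positivity
    have h1 : (⌊t * 3 ^ n⌋₊ : ℝ) ≤ t * 3 ^ n := Nat.floor_le (by nlinarith [ht.1.1])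
    have h2 : t * 3 ^ n < ⌊t * 3 ^ n⌋₊ + 1 := Nat.lt_floor_add_one _
    constructor
    · rw [div_le_iff₀ hpos, ← heq]; linarith
    · rw [lt_div_iff₀ hpos, ← heq]; linarith
  calc MeasureTheory.volume S ≤ _ := MeasureTheory.measure_mono hsub
    _ ≤ _ := by
        rw [Real.volume_Ico]
        apply ENNReal.ofReal_le_ofReal
        rw [div_sub_div_same, add_sub_cancel_left, one_div_pow]

/-! ### The self-similar measure via the digit coding -/

noncomputable def PhiH (α : ℝ) (t : ℝ) : V2 := piH α (tdig t)

noncomputable def muH (α : ℝ) : MeasureTheory.Measure V2 :=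
  MeasureTheory.Measure.map (PhiH α) (MeasureTheory.volume.restrict (Set.Ico (0:ℝ) 1))

section
open MeasureTheory
variable {α : ℝ} {K : Set V2}

lemma PhiH_measurable (hα : α ∈ Set.Ioo (0:ℝ) 1) : Measurable (PhiH α) := by
  refine measurable_of_tendsto_metrizable
    (f := fun n t => Fl α (cw (tdig t) n) (hanoiP 0)) (fun n => ?_) ?_
  · have h1 : Measurable fun t : ℝ => (fun i : Fin n => tdig t (i : ℕ)) :=
      measurable_pi_lambda _ fun i => tdig_measurable (i : ℕ)
    exact (measurable_of_countable fun v : Fin n → Fin 3 =>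
      Fl α (List.ofFn fun i => c3 (v i)) (hanoiP 0)).comp h1
  · rw [tendsto_pi_nhds]
    intro t
    exact piH_tendsto hα (tdig t)

/-- The exponent `d = log 3 / (log 2 - log (1-α))`. -/
noncomputable def dExp (α : ℝ) : ℝ := Real.log 3 / (Real.log 2 - Real.log (1 - α))

lemma dExp_denom_pos (hα : α ∈ Set.Ioo (0:ℝ) 1) : 0 < Real.log 2 - Real.log (1 - α) := by
  have h1 : Real.log (1 - α) < 0 := Real.log_neg (by linarith [hα.2]) (by linarith [hα.1])
  have h2 : 0 < Real.log 2 := Real.log_pos (by norm_num)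
  linarith

lemma dExp_pos (hα : α ∈ Set.Ioo (0:ℝ) 1) : 0 < dExp α :=
  div_pos (Real.log_pos (by norm_num)) (dExp_denom_pos hα)

lemma rpow_dExp (hα : α ∈ Set.Ioo (0:ℝ) 1) : ((1 - α) / 2 : ℝ) ^ dExp α = (1/3 : ℝ) := by
  obtain ⟨h0, h1⟩ := hα
  have hr : (0:ℝ) < (1 - α) / 2 := by linarith
  rw [Real.rpow_def_of_pos hr]
  have hlog : Real.log ((1 - α) / 2) = Real.log (1 - α) - Real.log 2 :=
    Real.log_div (by linarith) (by norm_num)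
  have hd : Real.log ((1 - α) / 2) * dExp α = -Real.log 3 := by
    rw [hlog, dExp]
    field_simp [ne_of_gt (dExp_denom_pos ⟨h0, h1⟩)]
    ring
  rw [hd, Real.exp_neg, Real.exp_log (by norm_num : (0:ℝ) < 3)]
  norm_num

lemma muH_le_one (hα : α ∈ Set.Ioo (0:ℝ) 1) : muH α Set.univ ≤ 1 := by
  rw [muH, Measure.map_apply (PhiH_measurable hα) MeasurableSet.univ]
  rw [Set.preimage_univ, Measure.restrict_apply_univ, Real.volume_Ico]
  norm_num

lemma muH_cb_le (hα : α ∈ Set.Ioo (0:ℝ) 1) (x : V2) (ρ : ℝ) (n : ℕ)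
    (hn : 2 * ρ < α * ((1 - α) / 2) ^ n) :
    muH α (Metric.closedBall x ρ) ≤ ENNReal.ofReal ((1/3 : ℝ) ^ (n + 1)) := by
  rw [muH, Measure.map_apply (PhiH_measurable hα) measurableSet_closedBall,
    Measure.restrict_apply' measurableSet_Ico]
  set A := PhiH α ⁻¹' Metric.closedBall x ρ ∩ Set.Ico (0:ℝ) 1
  rcases A.eq_empty_or_nonempty with hA | ⟨t', ht'⟩
  · rw [hA]; simp
  refine le_trans (measure_mono ?_) (prefix_vol (tdig t') (n + 1))
  intro t ht
  refine ⟨ht.2, fun i hi => ?_⟩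
  by_contra hne
  have hsep := piH_sep hα n (tdig t) (tdig t') ⟨i, Nat.lt_succ_iff.1 hi, hne⟩
  have hd : dist (piH α (tdig t)) (piH α (tdig t')) ≤ 2 * ρ := by
    calc dist (piH α (tdig t)) (piH α (tdig t'))
        ≤ dist (piH α (tdig t)) x + dist (piH α (tdig t')) x := dist_triangle_right _ _ _
      _ ≤ ρ + ρ := add_le_add ht.1 ht'.1
      _ = 2 * ρ := by ring
  linarith

lemma muH_cb_bound (hα : α ∈ Set.Ioo (0:ℝ) 1) (x : V2) (ρ : ℝ) (hρ : 0 ≤ ρ) :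
    muH α (Metric.closedBall x ρ) ≤ ENNReal.ofReal ((2 * ρ / α) ^ dExp α) := by
  obtain ⟨h0, h1⟩ := hα
  have hr0 : (0:ℝ) < (1 - α) / 2 := by linarith
  have hr1 : (1 - α) / 2 < 1 := by linarith
  have hd0 : 0 < dExp α := dExp_pos ⟨h0, h1⟩
  have key : ∀ n : ℕ, ((1 - α) / 2) ^ (n + 1) ≤ 2 * ρ / α → 2 * ρ < α * ((1 - α) / 2) ^ n →
      muH α (Metric.closedBall x ρ) ≤ ENNReal.ofReal ((2 * ρ / α) ^ dExp α) := by
    intro n hle hlt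
    refine le_trans (muH_cb_le ⟨h0, h1⟩ x ρ n hlt) (ENNReal.ofReal_le_ofReal ?_)
    calc ((1:ℝ)/3) ^ (n + 1) = (((1 - α) / 2 : ℝ) ^ dExp α) ^ (n + 1) := by
          rw [rpow_dExp ⟨h0, h1⟩]
      _ = (((1 - α) / 2 : ℝ) ^ (n + 1 : ℕ)) ^ dExp α := by
          rw [← Real.rpow_natCast (((1 - α) / 2 : ℝ) ^ dExp α) (n + 1),
            ← Real.rpow_natCast ((1 - α) / 2) (n + 1), ← Real.rpow_mul hr0.le,
            ← Real.rpow_mul hr0.le, mul_comm]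
      _ ≤ (2 * ρ / α) ^ dExp α :=
          Real.rpow_le_rpow (by positivity) hle hd0.le
  rcases lt_or_ge (2 * ρ) α with hsm | hbig
  · rcases eq_or_lt_of_le hρ with rfl | hρ'
    · -- ρ = 0 : measure is 0
      have hlim : Filter.Tendsto (fun n : ℕ => ENNReal.ofReal ((1/3 : ℝ) ^ (n + 1)))
          Filter.atTop (nhds 0) := by
        rw [← ENNReal.ofReal_zero]
        refine (ENNReal.continuous_ofReal.tendsto 0).comp ?_
        exact (tendsto_pow_atTop_nhds_zero_of_lt_one (by norm_num) (by norm_num)).comp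
          (Filter.tendsto_add_atTop_nat 1)
      have hle : ∀ n : ℕ, muH α (Metric.closedBall x 0) ≤ ENNReal.ofReal ((1/3 : ℝ) ^ (n + 1)) :=
        fun n => muH_cb_le ⟨h0, h1⟩ x 0 n (by simpa using mul_pos h0 (pow_pos hr0 n))
      have : muH α (Metric.closedBall x 0) ≤ 0 :=
        ge_of_tendsto hlim (Filter.Eventually.of_forall hle)
      exact le_trans this zero_le
    · -- 0 < 2ρ < α : find the right scale n
      have hq1 : 2 * ρ / α < 1 := (div_lt_one h0).2 hsm
      have hq0 : 0 < 2 * ρ / α := by positivity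
      obtain ⟨k, hk⟩ := exists_pow_lt_of_lt_one hq0 hr1
      have hex : ∃ m, ((1 - α) / 2) ^ (m + 1) ≤ 2 * ρ / α := ⟨k, by
        calc ((1 - α) / 2) ^ (k + 1) ≤ ((1 - α) / 2) ^ k := by
              refine pow_le_pow_of_le_one hr0.le hr1.le (by omega)
          _ ≤ 2 * ρ / α := hk.le⟩
      classical
      let n := Nat.find hex
      have hn1 : ((1 - α) / 2) ^ (n + 1) ≤ 2 * ρ / α := Nat.find_spec hex
      have hn2 : 2 * ρ / α < ((1 - α) / 2) ^ n := by
        rcases Nat.eq_zero_or_pos n with hz | hpos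
        · rw [hz, pow_zero]; exact hq1
        · have := Nat.find_min hex (m := n - 1) (by omega)
          push_neg at this
          calc 2 * ρ / α < ((1 - α) / 2) ^ (n - 1 + 1) := this
            _ = ((1 - α) / 2) ^ n := by congr 1; omega
      refine key n hn1 ?_
      rw [div_lt_iff₀ h0] at hn2
      linarith [hn2]
  · -- big radius: measure ≤ 1 ≤ rhs
    have h1x : (1:ℝ) ≤ 2 * ρ / α := by rw [le_div_iff₀ h0]; linarith
    have h1le : (1 : ENNReal) ≤ ENNReal.ofReal ((2 * ρ / α) ^ dExp α) := by
      rw [← ENNReal.ofReal_one]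
      refine ENNReal.ofReal_le_ofReal ?_
      calc (1:ℝ) = (1:ℝ) ^ dExp α := (Real.one_rpow _).symm
        _ ≤ (2 * ρ / α) ^ dExp α := Real.rpow_le_rpow zero_le_one h1x hd0.le
    exact le_trans (le_trans (measure_mono (Set.subset_univ _)) (muH_le_one ⟨h0, h1⟩)) h1le


lemma muH_K (hα : α ∈ Set.Ioo (0:ℝ) 1) (hK : K = ⋃ i : Fin 6, hanoiF α i '' K)
    (hKne : K.Nonempty) (hKc : IsCompact K) : muH α K = 1 := by
  rw [muH, Measure.map_apply (PhiH_measurable hα) hKc.measurableSet,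
    Measure.restrict_apply' measurableSet_Ico]
  have hss : Set.Ico (0:ℝ) 1 ⊆ PhiH α ⁻¹' K := fun t _ => piH_mem_K hα hK hKne hKc (tdig t)
  rw [Set.inter_eq_right.2 hss, Real.volume_Ico]
  norm_num

/-- Mass distribution principle: the lower bound `dExp α ≤ dimH K`. -/
lemma dExp_le_dimH (hα : α ∈ Set.Ioo (0:ℝ) 1) (hK : K = ⋃ i : Fin 6, hanoiF α i '' K)
    (hKne : K.Nonempty) (hKc : IsCompact K) : ENNReal.ofReal (dExp α) ≤ dimH K := by
  have h0 := hα.1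
  have hd0 : 0 < dExp α := dExp_pos hα
  set d := dExp α with hd
  set C : ENNReal := ENNReal.ofReal ((2 / α) ^ d) with hC
  have hCpos : (0:ℝ) < (2 / α) ^ d := Real.rpow_pos_of_pos (by positivity) d
  have hC0 : C ≠ 0 := by
    rw [hC, Ne, ENNReal.ofReal_eq_zero, not_le]
    exact hCpos
  have hCt : C ≠ ⊤ := ENNReal.ofReal_ne_top
  have hle : C⁻¹ • muH α ≤ MeasureTheory.Measure.hausdorffMeasure d := by
    refine MeasureTheory.Measure.le_hausdorffMeasure d _ 1 one_pos fun s hs => ?_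
    rcases s.eq_empty_or_nonempty with rfl | ⟨x, hx⟩
    · simp
    have hdne : EMetric.diam s ≠ ⊤ := (lt_of_le_of_lt hs ENNReal.one_lt_top).ne
    set D := (EMetric.diam s).toReal with hD
    have hD0 : 0 ≤ D := ENNReal.toReal_nonneg
    have hsub : s ⊆ Metric.closedBall x D := by
      intro y hy
      rw [Metric.mem_closedBall, dist_edist]
      exact ENNReal.toReal_mono hdne (EMetric.edist_le_diam_of_mem hy hx)
    have h1 : muH α s ≤ ENNReal.ofReal ((2 * D / α) ^ d) :=
      le_trans (measure_mono hsub) (muH_cb_bound hα x D hD0)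
    have h2 : ENNReal.ofReal ((2 * D / α) ^ d) = C * (EMetric.diam s) ^ d := by
      rw [show 2 * D / α = (2 / α) * D by ring, Real.mul_rpow (by positivity) hD0,
        ENNReal.ofReal_mul hCpos.le, ← ENNReal.ofReal_rpow_of_nonneg hD0 hd0.le,
        ENNReal.ofReal_toReal hdne]
    rw [MeasureTheory.Measure.smul_apply, smul_eq_mul]
    calc C⁻¹ * muH α s ≤ C⁻¹ * (C * EMetric.diam s ^ d) :=
          mul_le_mul_right (h1.trans_eq h2) _
      _ = EMetric.diam s ^ d := by rw [← mul_assoc, ENNReal.inv_mul_cancel hC0 hCt, one_mul]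
  have hμH : MeasureTheory.Measure.hausdorffMeasure d K ≠ 0 := by
    have hKK := hle K
    rw [MeasureTheory.Measure.smul_apply, smul_eq_mul, muH_K hα hK hKne hKc, mul_one] at hKK
    intro h
    rw [h, le_zero_iff] at hKK
    exact ENNReal.inv_ne_zero.2 hCt hKK
  have : ((d.toNNReal : NNReal) : ENNReal) ≤ dimH K := by
    apply le_dimH_of_hausdorffMeasure_ne_zero
    rwa [Real.coe_toNNReal d hd0.le]
  simpa [ENNReal.ofReal] using this

end

/-! ### The horizontal segment inside `K` -/

def Eseg : Set V2 := {x | x 1 = 0 ∧ x 0 ∈ Set.Icc (0:ℝ) 1}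

section
variable {α : ℝ} {K : Set V2}

lemma Eseg_step (hα : α ∈ Set.Ioo (0:ℝ) 1) {x : V2} (hx : x ∈ Eseg) :
    ∃ i : Fin 6, ∃ y ∈ Eseg, x = hanoiF α i y := by
  obtain ⟨h0, h1⟩ := hα
  obtain ⟨hx1, hx0, hx0'⟩ := hx
  have hne : (1:ℝ) - α ≠ 0 := by linarith
  rcases le_or_gt (x 0) ((1 - α)/2) with h | h
  · refine ⟨0, !₂[2 * x 0 / (1 - α), 0], ⟨by simp, ?_, ?_⟩, ?_⟩
    · simp only [Matrix.cons_val_zero]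
      exact div_nonneg (by linarith) (by linarith)
    · simp only [Matrix.cons_val_zero]
      rw [div_le_one (by linarith)]; linarith
    · ext j
      rw [cornerF_apply 0 (by decide)]
      fin_cases j
      · simp [hanoiP]; field_simp
      · simp [hanoiP]; exact hx1
  rcases le_or_gt ((1 + α)/2) (x 0) with h' | h'
  · refine ⟨2, !₂[(2 * x 0 - 1 - α) / (1 - α), 0], ⟨by simp, ?_, ?_⟩, ?_⟩
    · simp only [Matrix.cons_val_zero]
      exact div_nonneg (by linarith) (by linarith)
    · simp only [Matrix.cons_val_zero]
      rw [div_le_one (by linarith)]; linarith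
    · ext j
      rw [cornerF_apply 2 (by decide)]
      fin_cases j
      · simp [hanoiP]; field_simp; ring
      · simp [hanoiP]; exact hx1
  · refine ⟨4, !₂[(2 * x 0 - 1 + α) / (2 * α), 0], ⟨by simp, ?_, ?_⟩, ?_⟩
    · simp only [Matrix.cons_val_zero]
      exact div_nonneg (by linarith) (by linarith)
    · simp only [Matrix.cons_val_zero]
      rw [div_le_one (by linarith)]; linarith
    · ext j
      fin_cases j
      · simp [hanoiF, hanoiA, hanoiP, PiLp.add_apply, PiLp.sub_apply]
        field_simp; ring
      · simp [hanoiF, hanoiA, hanoiP, PiLp.add_apply, PiLp.sub_apply]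
        exact hx1

lemma p0_coord (j : Fin 2) : hanoiP 0 j = 0 := by
  fin_cases j <;> simp [hanoiP]

lemma Eseg_dist_p0 {x : V2} (hx : x ∈ Eseg) : dist x (hanoiP 0) ≤ 1 := by
  obtain ⟨hx1, hx0, hx0'⟩ := hx
  rw [dist_eq, p0_coord, p0_coord, hx1]
  rw [show x 0 - 0 = x 0 by ring, show (0:ℝ) - 0 = 0 by ring]
  rw [show (0:ℝ)^2 = 0 by ring, add_zero, Real.sqrt_sq_eq_abs, abs_le]
  constructor <;> linarith

lemma Eseg_decomp (hα : α ∈ Set.Ioo (0:ℝ) 1) {x : V2} (hx : x ∈ Eseg) (n : ℕ) :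
    ∃ l : List (Fin 6), l.length = n ∧ ∃ y ∈ Eseg, x = Fl α l y := by
  induction n with
  | zero => exact ⟨[], rfl, x, hx, rfl⟩
  | succ n ih =>
      obtain ⟨l, hl, y, hy, hxy⟩ := ih
      obtain ⟨i, y', hy', hyy⟩ := Eseg_step hα hy
      exact ⟨l ++ [i], by simp [hl], y', hy', by rw [hxy, hyy, Fl_append]; rfl⟩

lemma Eseg_subset_K (hα : α ∈ Set.Ioo (0:ℝ) 1) (hK : K = ⋃ i : Fin 6, hanoiF α i '' K)
    (hKne : K.Nonempty) (hKc : IsCompact K) : Eseg ⊆ K := by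
  intro x hx
  obtain ⟨h0, h1⟩ := hα
  have hc0 : (0:ℝ) ≤ max ((1 - α) / 2) α := le_max_of_le_right h0.le
  have hc1 : max ((1 - α) / 2) α < 1 := max_lt (by linarith) h1
  rw [← hKc.isClosed.closure_eq]
  rw [Metric.mem_closure_iff]
  intro ε hε
  obtain ⟨n, hn⟩ := exists_pow_lt_of_lt_one hε hc1
  obtain ⟨l, hlen, y, hy, rfl⟩ := Eseg_decomp ⟨h0, h1⟩ hx n
  refine ⟨Fl α l (hanoiP 0), Fl_mem hK l (p0_mem_K ⟨h0, h1⟩ hK hKne hKc), ?_⟩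
  calc dist (Fl α l y) (Fl α l (hanoiP 0))
      ≤ (max ((1 - α) / 2) α) ^ l.length * dist y (hanoiP 0) := Fl_dist_le ⟨h0, h1⟩ l _ _
    _ ≤ (max ((1 - α) / 2) α) ^ n * 1 := by
        rw [hlen]
        exact mul_le_mul_of_nonneg_left (Eseg_dist_p0 hy) (pow_nonneg hc0 n)
    _ = (max ((1 - α) / 2) α) ^ n := mul_one _
    _ < ε := hn

lemma proj_Eseg : (fun x : V2 => x 0) '' Eseg = Set.Icc (0:ℝ) 1 := by
  ext t
  constructor
  · rintro ⟨x, hx, rfl⟩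
    exact hx.2
  · intro ht
    refine ⟨!₂[t, 0], ⟨by simp, by simpa using ht⟩, by simp⟩

lemma one_le_dimH_K (hα : α ∈ Set.Ioo (0:ℝ) 1) (hK : K = ⋃ i : Fin 6, hanoiF α i '' K)
    (hKne : K.Nonempty) (hKc : IsCompact K) : 1 ≤ dimH K := by
  have h1 : dimH (Set.Icc (0:ℝ) 1) = 1 := by
    rw [Real.dimH_of_mem_nhds
      (Icc_mem_nhds (by norm_num) (by norm_num) : Set.Icc (0:ℝ) 1 ∈ nhds (1/2 : ℝ))]
    simp
  calc (1 : ENNReal) = dimH ((fun x : V2 => x 0) '' Eseg) := by rw [proj_Eseg, h1]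
    _ ≤ dimH Eseg := (lipschitz_coord 0).dimH_image_le Eseg
    _ ≤ dimH K := dimH_mono (Eseg_subset_K hα hK hKne hKc)

end

/-! ### Upper bound machinery -/

def mid : Fin 3 → Fin 6 := ![3, 4, 5]

def badSet (α : ℝ) (K : Set V2) : Set V2 :=
  ⋃ (l : List (Fin 6)) (j : Fin 3), Fl α l '' (hanoiF α (mid j) '' K)

def covSet (α : ℝ) (K : Set V2) (n : ℕ) : Set V2 :=
  ⋃ v : List.Vector (Fin 3) n, Fl α (v.1.map c3) '' K

section
open MeasureTheory
variable {α : ℝ} {K : Set V2}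

lemma Fl_lipschitz (hα : α ∈ Set.Ioo (0:ℝ) 1) (l : List (Fin 6)) :
    LipschitzWith ((max ((1 - α) / 2) α).toNNReal ^ l.length) (Fl α l) := by
  have hc : (0:ℝ) ≤ max ((1 - α) / 2) α := le_max_of_le_right hα.1.le
  refine LipschitzWith.of_dist_le_mul fun x y => ?_
  have h := Fl_dist_le hα l x y
  rwa [show (((max ((1 - α) / 2) α).toNNReal ^ l.length : NNReal) : ℝ)
    = (max ((1 - α) / 2) α) ^ l.length by rw [NNReal.coe_pow, Real.coe_toNNReal _ hc]]

lemma Flc_lipschitz (hα : α ∈ Set.Ioo (0:ℝ) 1) (l : List (Fin 6)) (hl : ∀ i ∈ l, i < 3) :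
    LipschitzWith (((1 - α) / 2).toNNReal ^ l.length) (Fl α l) := by
  have hc : (0:ℝ) ≤ (1 - α) / 2 := by linarith [hα.2]
  refine LipschitzWith.of_dist_le_mul fun x y => ?_
  rw [show ((((1 - α) / 2).toNNReal ^ l.length : NNReal) : ℝ)
    = ((1 - α) / 2) ^ l.length by rw [NNReal.coe_pow, Real.coe_toNNReal _ hc]]
  exact (Fl_corner_dist hα.2.le l hl x y).le

lemma Flc_ediam (hα : α ∈ Set.Ioo (0:ℝ) 1) (l : List (Fin 6)) (hl : ∀ i ∈ l, i < 3)
    (s : Set V2) : EMetric.diam (Fl α l '' s)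
      ≤ (ENNReal.ofReal ((1 - α) / 2)) ^ l.length * EMetric.diam s := by
  have h := (Flc_lipschitz hα l hl).ediam_image_le s
  rwa [show ((((1 - α) / 2).toNNReal ^ l.length : NNReal) : ENNReal)
    = (ENNReal.ofReal ((1 - α) / 2)) ^ l.length by rw [ENNReal.coe_pow]; rfl] at h

/-- subsets of affine lines have Hausdorff dimension at most 1 -/
lemma dimH_le_one_of_line {S : Set V2} {a b c : ℝ} (hab : a ^ 2 + b ^ 2 = 1)
    (hS : ∀ z ∈ S, a * z 0 + b * z 1 = c) : dimH S ≤ 1 := by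
  set φ : ℝ → V2 := fun t => !₂[c * a - t * b, c * b + t * a] with hφ
  have hlip : LipschitzWith 1 φ := by
    refine LipschitzWith.of_dist_le_mul fun t t' => ?_
    rw [NNReal.coe_one, one_mul, dist_eq, Real.dist_eq]
    have h1 : (φ t 0 - φ t' 0) ^ 2 + (φ t 1 - φ t' 1) ^ 2 = (t - t') ^ 2 := by
      simp only [hφ, Matrix.cons_val_zero, Matrix.cons_val_one, Matrix.head_cons]
      linear_combination (t - t') ^ 2 * hab
    rw [h1, Real.sqrt_sq_eq_abs]
  have hsub : S ⊆ φ '' ((fun z : V2 => -b * z 0 + a * z 1) '' S) := by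
    intro z hz
    refine ⟨-b * z 0 + a * z 1, ⟨z, hz, rfl⟩, ?_⟩
    have hz' := hS z hz
    ext j
    fin_cases j <;>
      simp only [hφ, Matrix.cons_val_zero, Matrix.cons_val_one, Matrix.head_cons,
        Fin.zero_eta, Fin.mk_one, Fin.isValue]
    · linear_combination (-a) * hz' + z 0 * hab
    · linear_combination (-b) * hz' + z 1 * hab
  calc dimH S ≤ dimH (φ '' ((fun z : V2 => -b * z 0 + a * z 1) '' S)) := dimH_mono hsub
    _ ≤ dimH ((fun z : V2 => -b * z 0 + a * z 1) '' S) := hlip.dimH_image_le _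
    _ ≤ dimH (Set.univ : Set ℝ) := dimH_mono (Set.subset_univ _)
    _ = 1 := Real.dimH_univ

lemma dimH_mid_image_le (j : Fin 3) (S : Set V2) :
    dimH (hanoiF α (mid j) '' S) ≤ 1 := by
  have hs := sqrt3_sq
  fin_cases j
  · refine dimH_le_one_of_line (a := Real.sqrt 3 / 2) (b := 1 / 2) (c := Real.sqrt 3 / 2)
      (by nlinarith) ?_
    rintro z ⟨x, -, rfl⟩
    simp only [mid, Matrix.cons_val_zero]
    simp [hanoiF, hanoiA, hanoiP, PiLp.add_apply, PiLp.sub_apply]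
    linear_combination (Real.sqrt 3 * α / 32 - α / 8 * x 1) * hs
  · refine dimH_le_one_of_line (a := 0) (b := 1) (c := 0) (by norm_num) ?_
    rintro z ⟨x, -, rfl⟩
    simp only [mid, Matrix.cons_val_one, Matrix.head_cons]
    simp [hanoiF, hanoiA, hanoiP, PiLp.add_apply, PiLp.sub_apply]
  · refine dimH_le_one_of_line (a := Real.sqrt 3 / 2) (b := -(1 / 2)) (c := 0)
      (by nlinarith) ?_
    rintro z ⟨x, -, rfl⟩
    simp only [mid]
    simp [hanoiF, hanoiA, hanoiP, PiLp.add_apply, PiLp.sub_apply]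
    linear_combination (α / 8 * x 1 - Real.sqrt 3 * α / 32) * hs

lemma dimH_badSet_le (hα : α ∈ Set.Ioo (0:ℝ) 1) : dimH (badSet α K) ≤ 1 := by
  rw [badSet, dimH_iUnion]
  refine iSup_le fun l => ?_
  rw [dimH_iUnion]
  refine iSup_le fun j => ?_
  calc dimH (Fl α l '' (hanoiF α (mid j) '' K))
      ≤ dimH (hanoiF α (mid j) '' K) := (Fl_lipschitz hα l).dimH_image_le _
    _ ≤ 1 := dimH_mid_image_le j K

lemma cover (hK : K = ⋃ i : Fin 6, hanoiF α i '' K) (n : ℕ) :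
    K ⊆ covSet α K n ∪ badSet α K := by
  induction n with
  | zero =>
      intro x hx
      exact Or.inl (Set.mem_iUnion.2 ⟨⟨[], rfl⟩, ⟨x, hx, rfl⟩⟩)
  | succ n ih =>
      intro x hx
      rcases ih hx with hc | hb
      · obtain ⟨v, hv⟩ := Set.mem_iUnion.1 hc
        obtain ⟨y, hy, rfl⟩ := hv
        have hy' : y ∈ ⋃ i : Fin 6, hanoiF α i '' K := by rw [← hK]; exact hy
        obtain ⟨i, hiu⟩ := Set.mem_iUnion.1 hy'
        obtain ⟨z, hz, rfl⟩ := hiu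
        have hcorner : ∀ j : Fin 3, i = c3 j →
            Fl α (v.1.map c3) (hanoiF α i z) ∈ covSet α K (n + 1) := by
          intro j hj
          refine Set.mem_iUnion.2 ⟨⟨v.1 ++ [j], by simp [v.2]⟩, ⟨z, hz, ?_⟩⟩
          rw [List.map_append, Fl_append]
          simp [hj]
        have hmid : ∀ j : Fin 3, i = mid j →
            Fl α (v.1.map c3) (hanoiF α i z) ∈ badSet α K := by
          intro j hj
          exact Set.mem_iUnion.2 ⟨v.1.map c3, Set.mem_iUnion.2 ⟨j,
            ⟨hanoiF α i z, ⟨z, hz, by rw [hj]⟩, rfl⟩⟩⟩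
        fin_cases i
        · exact Or.inl (hcorner 0 (by decide))
        · exact Or.inl (hcorner 1 (by decide))
        · exact Or.inl (hcorner 2 (by decide))
        · exact Or.inr (hmid 0 (by decide))
        · exact Or.inr (hmid 1 (by decide))
        · exact Or.inr (hmid 2 (by decide))
      · exact Or.inr hb

lemma dimH_covInter_le (hα : α ∈ Set.Ioo (0:ℝ) 1) (hKc : IsCompact K) :
    dimH (⋂ n, covSet α K n) ≤ ENNReal.ofReal (dExp α) := by
  obtain ⟨h0, h1⟩ := id hα
  have hr0 : (0:ℝ) < (1 - α) / 2 := by linarith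
  have hr1 : (1 - α) / 2 < 1 := by linarith
  have hD : EMetric.diam K ≠ ⊤ := hKc.isBounded.ediam_ne_top
  have main : ∀ s : ℝ, dExp α < s → dimH (⋂ n, covSet α K n) ≤ ENNReal.ofReal s := by
    intro s hs
    have hs0 : 0 < s := lt_trans (dExp_pos hα) hs
    have hrs : 3 * ((1 - α) / 2) ^ s < 1 := by
      have h2 : ((1 - α) / 2 : ℝ) ^ s < (1/3 : ℝ) := by
        rw [← rpow_dExp hα]
        exact Real.rpow_lt_rpow_of_exponent_gt hr0 hr1 hs
      linarith
    set q : ENNReal := ENNReal.ofReal (3 * ((1 - α) / 2) ^ s) with hq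
    have hq1 : q < 1 := by
      rw [hq]
      exact ENNReal.ofReal_lt_one.2 hrs
    set D := EMetric.diam K with hDdef
    have hDs : D ^ s ≠ ⊤ := ENNReal.rpow_ne_top_of_nonneg hs0.le hD
    -- the bounding sequence and its limit
    have hbig : ∀ n : ℕ, ((3:ENNReal) ^ n) *
        (((ENNReal.ofReal ((1 - α) / 2)) ^ n * D) ^ s) = q ^ n * D ^ s := by
      intro n
      rw [ENNReal.mul_rpow_of_ne_top (ENNReal.pow_ne_top ENNReal.ofReal_ne_top) hD]
      rw [← ENNReal.rpow_natCast (ENNReal.ofReal ((1 - α) / 2)) n, ← ENNReal.rpow_mul,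
        mul_comm (n:ℝ) s, ENNReal.rpow_mul, ENNReal.rpow_natCast]
      rw [← mul_assoc, ← mul_pow]
      congr 2
      rw [ENNReal.ofReal_rpow_of_nonneg hr0.le hs0.le, hq,
        show (3:ENNReal) = ENNReal.ofReal 3 by norm_num,
        ← ENNReal.ofReal_mul (by norm_num)]
    have htendsto : Filter.Tendsto (fun n : ℕ => q ^ n * D ^ s) Filter.atTop (nhds 0) := by
      have h := ENNReal.Tendsto.mul_const
        (ENNReal.tendsto_pow_atTop_nhds_zero_of_lt_one hq1) (Or.inr hDs)
      simpa using h
    -- apply the covering bound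
    have hcov := Measure.hausdorffMeasure_le_liminf_sum s (⋂ n, covSet α K n)
      (fun n => (ENNReal.ofReal ((1 - α) / 2)) ^ n * D)
      (by
        have h := ENNReal.Tendsto.mul_const
          (ENNReal.tendsto_pow_atTop_nhds_zero_of_lt_one
            (by rw [ENNReal.ofReal_lt_one]; exact hr1 : ENNReal.ofReal ((1 - α) / 2) < 1))
          (Or.inr hD)
        simpa using h)
      (fun n v => Fl α ((v : List.Vector (Fin 3) n).1.map c3) '' K)
      (Filter.Eventually.of_forall fun n v => by
        have hlen : ((v : List.Vector (Fin 3) n).1.map c3).length = n := by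
          rw [List.length_map, v.2]
        have := Flc_ediam hα ((v : List.Vector (Fin 3) n).1.map c3)
          (fun i hi => by
            obtain ⟨j, _, rfl⟩ := List.mem_map.1 hi
            exact c3_lt j) K
        rwa [hlen] at this)
      (Filter.Eventually.of_forall fun n => Set.iInter_subset _ n)
    -- bound the sums
    have hsum : ∀ n : ℕ, (∑ v : List.Vector (Fin 3) n,
        EMetric.diam (Fl α ((v : List.Vector (Fin 3) n).1.map c3) '' K) ^ s)
          ≤ q ^ n * D ^ s := by
      intro n
      calc (∑ v : List.Vector (Fin 3) n,
          EMetric.diam (Fl α ((v : List.Vector (Fin 3) n).1.map c3) '' K) ^ s)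
          ≤ ∑ _v : List.Vector (Fin 3) n,
            (((ENNReal.ofReal ((1 - α) / 2)) ^ n * D) ^ s) := by
            refine Finset.sum_le_sum fun v _ => ?_
            refine ENNReal.rpow_le_rpow ?_ hs0.le
            have hlen : ((v : List.Vector (Fin 3) n).1.map c3).length = n := by
              rw [List.length_map, v.2]
            have := Flc_ediam hα ((v : List.Vector (Fin 3) n).1.map c3)
              (fun i hi => by
                obtain ⟨j, _, rfl⟩ := List.mem_map.1 hi
                exact c3_lt j) K
            rwa [hlen] at this
        _ = ((3:ENNReal) ^ n) * (((ENNReal.ofReal ((1 - α) / 2)) ^ n * D) ^ s) := by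
            rw [Finset.sum_const, nsmul_eq_mul]
            congr 1
            rw [Finset.card_univ, card_vector, Fintype.card_fin]
            push_cast
            ring
        _ = q ^ n * D ^ s := hbig n
    have hliminf : Filter.liminf (fun n => ∑ v : List.Vector (Fin 3) n,
        EMetric.diam (Fl α ((v : List.Vector (Fin 3) n).1.map c3) '' K) ^ s)
          Filter.atTop ≤ 0 := by
      calc Filter.liminf _ Filter.atTop
          ≤ Filter.liminf (fun n : ℕ => q ^ n * D ^ s) Filter.atTop :=
            Filter.liminf_le_liminf (Filter.Eventually.of_forall hsum)
        _ = 0 := htendsto.liminf_eq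
    have hzero : MeasureTheory.Measure.hausdorffMeasure s (⋂ n, covSet α K n) = 0 :=
      le_antisymm (hcov.trans hliminf) zero_le
    have : dimH (⋂ n, covSet α K n) ≤ (s.toNNReal : ENNReal) := by
      apply dimH_le_of_hausdorffMeasure_ne_top
      rw [Real.coe_toNNReal _ hs0.le, hzero]
      exact ENNReal.zero_ne_top
    simpa [ENNReal.ofReal] using this
  refine ENNReal.le_of_forall_pos_le_add fun ε hε _ => ?_
  have h := main (dExp α + ε) (lt_add_of_pos_right _ (by exact_mod_cast hε))
  calc dimH (⋂ n, covSet α K n) ≤ ENNReal.ofReal (dExp α + ε) := h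
    _ = ENNReal.ofReal (dExp α) + ENNReal.ofReal ε :=
        ENNReal.ofReal_add (dExp_pos hα).le (by positivity)
    _ = ENNReal.ofReal (dExp α) + ε := by rw [ENNReal.ofReal_coe_nnreal]

lemma dimH_K_le (hα : α ∈ Set.Ioo (0:ℝ) 1) (hK : K = ⋃ i : Fin 6, hanoiF α i '' K)
    (hKc : IsCompact K) :
    dimH K ≤ max 1 (ENNReal.ofReal (dExp α)) := by
  have hsub : K ⊆ (⋂ n, covSet α K n) ∪ badSet α K := by
    intro x hx
    by_cases hb : x ∈ badSet α K
    · exact Or.inr hb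
    · exact Or.inl (Set.mem_iInter.2 fun n => (cover hK n hx).resolve_right hb)
  calc dimH K ≤ dimH ((⋂ n, covSet α K n) ∪ badSet α K) := dimH_mono hsub
    _ = max (dimH (⋂ n, covSet α K n)) (dimH (badSet α K)) := dimH_union _ _
    _ ≤ max 1 (ENNReal.ofReal (dExp α)) := by
        refine max_le ?_ ?_
        · exact le_max_of_le_right (dimH_covInter_le hα hKc)
        · exact le_max_of_le_left (dimH_badSet_le hα)

end
end Hanoi


/-- For `α ∈ (0,1)`, any nonempty compact set `K` with `K = ⋃_{i=1}^{6} F_{α,i}(K)`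
has Hausdorff dimension `max{1, log 3 / (log 2 − log(1−α))}`. -/
theorem hanoi_attractor_dimH (α : ℝ) (hα : α ∈ Set.Ioo (0 : ℝ) 1)
    (K : Set (EuclideanSpace ℝ (Fin 2))) (hKne : K.Nonempty) (hKc : IsCompact K)
    (hK : K = ⋃ i : Fin 6, hanoiF α i '' K) :
    dimH K = ENNReal.ofReal (max 1 (Real.log 3 / (Real.log 2 - Real.log (1 - α)))) := by
  rw [show Real.log 3 / (Real.log 2 - Real.log (1 - α)) = Hanoi.dExp α from rfl]
  apply le_antisymm
  · refine (Hanoi.dimH_K_le hα hK hKc).trans ?_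
    rcases le_total (1:ℝ) (Hanoi.dExp α) with h | h
    · rw [max_eq_right h]
      exact max_le (by
          rw [← ENNReal.ofReal_one]
          exact ENNReal.ofReal_le_ofReal h) le_rfl
    · rw [max_eq_left h, ENNReal.ofReal_one]
      exact max_le le_rfl (by
        rw [← ENNReal.ofReal_one]
        exact ENNReal.ofReal_le_ofReal h)
  · rcases le_total (1:ℝ) (Hanoi.dExp α) with h | h
    · rw [max_eq_right h]
      exact Hanoi.dExp_le_dimH hα hK hKne hKc
    · rw [max_eq_left h, ENNReal.ofReal_one]
      exact Hanoi.one_le_dimH_K hα hK hKne hKc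
end

section
/- Let a < b be real numbers, let u : ℝ → ℝ be differentiable on [a,b] with derivative u′ such that u′ and (u′)² are interval-integrable on [a,b], and let a = t₀ < t₁ < ⋯ < t_m = b be a partition. Then ∫_a^b (u′(t))² dt ≥ Σ_{i=1}^{m} (u(t_i) − u(t_{i−1}))² / (t_i − t_{i−1}). In particular, among functions with prescribed values at the partition points, the piecewise linear interpolant minimizes the Dirichlet energy ∫ (u′)². -/
open MeasureTheory

lemma segment_energy (c d : ℝ) (hcd : c < d) (u u' : ℝ → ℝ)
    (hderiv : ∀ t ∈ Set.Icc c d, HasDerivAt u (u' t) t)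
    (h1 : IntervalIntegrable u' volume c d)
    (h2 : IntervalIntegrable (fun t => (u' t) ^ 2) volume c d) :
    (u d - u c) ^ 2 / (d - c) ≤ ∫ s in c..d, (u' s) ^ 2 := by
  have hle : c ≤ d := hcd.le
  have ftc : ∫ s in c..d, u' s = u d - u c := by
    apply intervalIntegral.integral_eq_sub_of_hasDerivAt _ h1
    intro x hx
    exact hderiv x (Set.uIcc_of_le hle ▸ hx)
  set k : ℝ := (u d - u c) / (d - c) with hk
  have hne : d - c ≠ 0 := by linarith
  have h3 : (0:ℝ) ≤ ∫ s in c..d, (u' s - k) ^ 2 :=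
    intervalIntegral.integral_nonneg hle (fun _ _ => sq_nonneg _)
  have e1 : ∫ s in c..d, (u' s - k) ^ 2
      = (∫ s in c..d, (u' s) ^ 2) - 2 * k * (u d - u c) + k ^ 2 * (d - c) := by
    have heq : ∀ s, (u' s - k) ^ 2 = ((u' s) ^ 2 - (2 * k) * u' s) + k ^ 2 := by
      intro s; ring
    simp_rw [heq]
    rw [intervalIntegral.integral_add (h2.sub (h1.const_mul _)) intervalIntegrable_const,
      intervalIntegral.integral_sub h2 (h1.const_mul _),
      intervalIntegral.integral_const_mul, ftc, intervalIntegral.integral_const,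
      smul_eq_mul]
    ring
  have hkd : k * (d - c) = u d - u c := by rw [hk, div_mul_cancel₀ _ hne]
  have hdiv : (u d - u c) ^ 2 / (d - c) = k * (u d - u c) := by
    rw [hk]; field_simp
  have hk2 : k ^ 2 * (d - c) = k * (u d - u c) := by
    rw [pow_two, mul_assoc, hkd]
  linarith [h3, e1]

/-- Partition energy estimate: if `u` is differentiable on `[a,b]` with derivative `u′`
(`u′` and `(u′)²` interval-integrable), and `a = t₀ < t₁ < ⋯ < t_m = b` is a partition,
then `∫_a^b (u′)² ≥ Σ_{i=1}^{m} (u(tᵢ) − u(t_{i−1}))²/(tᵢ − t_{i−1})`, i.e. the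
piecewise linear interpolant minimizes the Dirichlet energy. -/
theorem partition_energy_estimate (a b : ℝ) (hab : a < b) (u u' : ℝ → ℝ)
    (hderiv : ∀ t ∈ Set.Icc a b, HasDerivAt u (u' t) t)
    (hint : IntervalIntegrable u' MeasureTheory.volume a b)
    (hint2 : IntervalIntegrable (fun t => (u' t) ^ 2) MeasureTheory.volume a b)
    (m : ℕ) (hm : 1 ≤ m) (t : ℕ → ℝ) (ht0 : t 0 = a) (htm : t m = b)
    (hmono : ∀ i < m, t i < t (i + 1)) :
    ∑ i ∈ Finset.range m, (u (t (i + 1)) - u (t i)) ^ 2 / (t (i + 1) - t i) ≤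
      ∫ s in a..b, (u' s) ^ 2 := by
  -- monotonicity of t on {0,...,m}
  have hmono' : ∀ i j : ℕ, i ≤ j → j ≤ m → t i ≤ t j := by
    intro i j hij hjm
    induction j with
    | zero => simp_all
    | succ n ih =>
      rcases Nat.eq_or_lt_of_le hij with h | h
      · rw [h]
      · exact le_trans (ih (Nat.lt_succ_iff.mp h) (le_trans (Nat.le_succ n) hjm))
          (hmono n (Nat.lt_of_succ_le hjm)).le
  have hmem : ∀ i ≤ m, t i ∈ Set.Icc a b := by
    intro i hi
    exact ⟨ht0 ▸ hmono' 0 i (Nat.zero_le _) hi, htm ▸ hmono' i m hi le_rfl⟩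
  have hsub : ∀ i < m, Set.uIcc (t i) (t (i+1)) ⊆ Set.uIcc a b := by
    intro i hi
    rw [Set.uIcc_of_le (hmono i hi).le, Set.uIcc_of_le hab.le]
    exact Set.Icc_subset_Icc (hmem i hi.le).1 (hmem (i+1) hi).2
  have hint2' : ∀ i < m, IntervalIntegrable (fun s => (u' s) ^ 2) volume (t i) (t (i+1)) :=
    fun i hi => hint2.mono_set (hsub i hi)
  have hint1' : ∀ i < m, IntervalIntegrable u' volume (t i) (t (i+1)) :=
    fun i hi => hint.mono_set (hsub i hi)
  have hsum : ∑ i ∈ Finset.range m, ∫ s in (t i)..(t (i+1)), (u' s) ^ 2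
      = ∫ s in a..b, (u' s) ^ 2 := by
    rw [← ht0, ← htm]
    exact intervalIntegral.sum_integral_adjacent_intervals (fun i hi => hint2' i hi)
  rw [← hsum]
  apply Finset.sum_le_sum
  intro i hi
  have hi' := Finset.mem_range.mp hi
  apply segment_energy (t i) (t (i+1)) (hmono i hi') u u'
  · intro x hx
    apply hderiv
    exact Set.Icc_subset_Icc (hmem i hi'.le).1 (hmem (i+1) hi').2 hx
  · exact hint1' i hi'
  · exact hint2' i hi'
end
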